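/- Assume (H1), (H2⁰) and K·L < α. Then the fixed points φ*_τ(ξ) satisfy the invariance identity φ*_τ(ξ) = φ*_r(Φ(r,τ)ξ) for all τ, r ∈ I and all ξ ∈ X. -/

import Mathlib

open Set MeasureTheory Real

theorem statement4
    {X : Type*} [NormedAddCommGroup X] [NormedSpace ℝ X] [CompleteSpace X]
    (τ₀ : ℝ)
    (Nt : ℝ → X → ℝ)
    (hNadd : ∀ t : ℝ, ∀ x y : X, Nt t (x + y) ≤ Nt t x + Nt t y)
    (hNsmul : ∀ t : ℝ, ∀ c : ℝ, ∀ x : X, Nt t (c • x) = |c| * Nt t x)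
    (ℓ : ℝ → ℝ)
    (hℓpos : ∀ t ∈ Set.Ici τ₀, 0 < ℓ t)
    (hℓloc : ∀ a b : ℝ, ∃ C : ℝ, ∀ t ∈ Set.Icc a b ∩ Set.Ici τ₀, ℓ t ≤ C)
    (hNequiv : ∀ t ∈ Set.Ici τ₀, ∀ x : X, (1 / ℓ t) * ‖x‖ ≤ Nt t x ∧ Nt t x ≤ ℓ t * ‖x‖)
    (Φ : ℝ → ℝ → X →L[ℝ] X)
    (hΦcont : ContinuousOn (fun p : ℝ × ℝ => Φ p.1 p.2) (Set.Ici τ₀ ×ˢ Set.Ici τ₀))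
    (hΦid : ∀ t ∈ Set.Ici τ₀, Φ t t = ContinuousLinearMap.id ℝ X)
    (hΦcomp : ∀ t ∈ Set.Ici τ₀, ∀ r ∈ Set.Ici τ₀, ∀ s ∈ Set.Ici τ₀,
      Φ t s = (Φ t r).comp (Φ r s))
    (K α : ℝ) (hK : 1 ≤ K) (hα : 0 < α)
    (hH1 : ∀ s ∈ Set.Ici τ₀, ∀ t ∈ Set.Ici τ₀, s ≤ t → ∀ x : X,
      Nt t (Φ t s x) ≤ K * Real.exp (-α * (t - s)) * Nt s x)
    (F : ℝ → X → X)
    (hFmeas : ∀ x : X, StronglyMeasurable (fun t => F t x))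
    (hFcont : ∀ᵐ t ∂(volume.restrict (Set.Ici τ₀)), Continuous (F t))
    (L M : ℝ) (hL : 0 ≤ L) (hM : 0 ≤ M)
    (hH2 : ∀ᵐ t ∂(volume.restrict (Set.Ici τ₀)),
      F t 0 = 0 ∧ (∀ x : X, Nt t (F t x) ≤ M) ∧
        (∀ x y : X, Nt t (F t x - F t y) ≤ L * Nt t (x - y)))
    (hKL : K * L < α)
    (φstar : ℝ → X → ℝ → X)
    (hφstarBC : ∀ τ ∈ Set.Ici τ₀, ∀ ξ : X, ContinuousOn (φstar τ ξ) (Set.Ici τ₀) ∧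
      ∃ C : ℝ, ∀ t ∈ Set.Ici τ₀, Nt t (φstar τ ξ t) ≤ C)
    (hφstarFix : ∀ τ ∈ Set.Ici τ₀, ∀ ξ : X, ∀ t ∈ Set.Ici τ₀,
      φstar τ ξ t = ∫ s in τ₀..t, Φ t s (F s (φstar τ ξ s + Φ s τ ξ)))
    (hφstarUniq : ∀ τ ∈ Set.Ici τ₀, ∀ ξ : X, ∀ ψ : ℝ → X, ContinuousOn ψ (Set.Ici τ₀) →
      (∃ C : ℝ, ∀ t ∈ Set.Ici τ₀, Nt t (ψ t) ≤ C) →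
      (∀ t ∈ Set.Ici τ₀, ψ t = ∫ s in τ₀..t, Φ t s (F s (ψ s + Φ s τ ξ))) →
      ∀ t ∈ Set.Ici τ₀, ψ t = φstar τ ξ t)
    :
    ∀ τ ∈ Set.Ici τ₀, ∀ r ∈ Set.Ici τ₀, ∀ ξ : X, ∀ t ∈ Set.Ici τ₀,
      φstar τ ξ t = φstar r (Φ r τ ξ) t := by
  intro τ hτ r hr ξ t ht
  refine hφstarUniq r hr (Φ r τ ξ) (φstar τ ξ) (hφstarBC τ hτ ξ).1 (hφstarBC τ hτ ξ).2
    (fun t' ht' => ?_) t ht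
  rw [hφstarFix τ hτ ξ t' ht']
  apply intervalIntegral.integral_congr
  intro s hs
  have hs' : s ∈ Set.Ici τ₀ := by
    rcases hs with ⟨h1, _⟩
    simp only [min_eq_left (Set.mem_Ici.mp ht')] at h1
    exact h1
  have := hΦcomp s hs' r hr τ hτ
  simp [this]
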